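/- Let G be a graph with at least two vertices, let v be a vertex of G, and let G' be the graph obtained from G by adding a new vertex v' and the edge vv'. Then: (i) a set S' of vertices of G' is a type I set for v' in G' with L_{S'}(v') = 1 if and only if S' ⊆ V(G), S' is a type I set for v in G, and L_{S'}(v) = 0; (ii) moreover, if R ⊆ V(G) is a type I set for v in G with L_R(v) = −1, then S = R ∪ {v} is a type I set for v' in G' with L_S(v') = 1. -/

import Mathlib

/-- A set of vertices is independent: no two of its vertices are adjacent. -/
def IndepSet {V : Type*} (G : SimpleGraph V) (S : Set V) : Prop :=
  ∀ u ∈ S, ∀ w ∈ S, ¬ G.Adj u w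

/-- `S` is a type I set for `v` in `G`: `S` is independent, every vertex
`u ∉ S ∪ {v}` has at least one and at most two neighbors in `S`, and `v` either
belongs to `S` or has at most two neighbors in `S`. -/
def TypeISet {V : Type*} (G : SimpleGraph V) (v : V) (S : Set V) : Prop :=
  IndepSet G S ∧
    (∀ u, u ∉ S → u ≠ v →
      1 ≤ (S ∩ G.neighborSet u).ncard ∧ (S ∩ G.neighborSet u).ncard ≤ 2) ∧
    (v ∈ S ∨ (S ∩ G.neighborSet v).ncard ≤ 2)

/-- The labeling `L_S(v) = l` : `0` if `v ∈ S`; `k ≥ 1` if `v ∉ S` and `v` has exactly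
`k` neighbors in `S`; `-1` if `N[v] ∩ S = ∅` and every neighbor of `v` has exactly one
neighbor in `S`; `-2` if `N[v] ∩ S = ∅` and some neighbor of `v` has exactly two
neighbors in `S`. -/
def HasLabel {V : Type*} (G : SimpleGraph V) (v : V) (S : Set V) (l : ℤ) : Prop :=
  (v ∈ S ∧ l = 0) ∨
  (v ∉ S ∧ ∃ k : ℕ, 1 ≤ k ∧ (S ∩ G.neighborSet v).ncard = k ∧ l = (k : ℤ)) ∨
  (v ∉ S ∧ S ∩ G.neighborSet v = ∅ ∧
    (∀ u ∈ G.neighborSet v, (S ∩ G.neighborSet u).ncard = 1) ∧ l = -1) ∨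
  (v ∉ S ∧ S ∩ G.neighborSet v = ∅ ∧
    (∃ u ∈ G.neighborSet v, (S ∩ G.neighborSet u).ncard = 2) ∧ l = -2)

/-- The star `K_{1,r}` with center `none` and the `r` leaves `some i`. -/
def starGraph (r : ℕ) : SimpleGraph (Option (Fin r)) where
  Adj a b := (a = none ∧ b ≠ none) ∨ (a ≠ none ∧ b = none)
  symm := by refine ⟨?_⟩; intro a b h; tauto
  loopless := by refine ⟨?_⟩; intro a h; tauto

/-- The graph obtained from `G` by adding a new vertex `none` adjacent only to `v`. -/
def addLeaf {V : Type*} (G : SimpleGraph V) (v : V) : SimpleGraph (Option V) where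
  Adj a b := match a, b with
    | some x, some y => G.Adj x y
    | none, some y => y = v
    | some x, none => x = v
    | none, none => False
  symm := by
    refine ⟨?_⟩
    intro a b h
    match a, b with
    | some x, some y => exact h.symm
    | none, some y => exact h
    | some x, none => exact h
    | none, none => exact h
  loopless := by
    refine ⟨?_⟩
    intro a h
    match a with
    | some x => exact G.loopless.irrefl x h
    | none => exact h

/-- The graph obtained from the disjoint union of `G` and `H` by adding the edge
between `v` (in `G`) and `v'` (in `H`). -/
def joinAt {V W : Type*} (G : SimpleGraph V) (H : SimpleGraph W) (v : V) (v' : W) :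
    SimpleGraph (V ⊕ W) where
  Adj a b := match a, b with
    | Sum.inl x, Sum.inl y => G.Adj x y
    | Sum.inr x, Sum.inr y => H.Adj x y
    | Sum.inl x, Sum.inr y => x = v ∧ y = v'
    | Sum.inr x, Sum.inl y => x = v' ∧ y = v
  symm := by
    refine ⟨?_⟩
    intro a b h
    match a, b with
    | Sum.inl x, Sum.inl y => exact h.symm
    | Sum.inr x, Sum.inr y => exact h.symm
    | Sum.inl x, Sum.inr y => exact ⟨h.2, h.1⟩
    | Sum.inr x, Sum.inl y => exact ⟨h.2, h.1⟩
  loopless := by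
    refine ⟨?_⟩
    intro a h
    match a with
    | Sum.inl x => exact G.loopless.irrefl x h
    | Sum.inr x => exact H.loopless.irrefl x h


section Helpers
variable {V : Type*} (G : SimpleGraph V) (v : V)

lemma nnone : (addLeaf G v).neighborSet none = {some v} := by
  ext a
  cases a <;> simp [SimpleGraph.neighborSet, addLeaf, SimpleGraph.Adj, eq_comm]

lemma nsome_ne (x : V) (hx : x ≠ v) :
    (addLeaf G v).neighborSet (some x) = some '' G.neighborSet x := by
  ext a
  cases a <;> simp [SimpleGraph.neighborSet, addLeaf, SimpleGraph.Adj, hx]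

lemma adj_some_some {x y : V} : (addLeaf G v).Adj (some x) (some y) ↔ G.Adj x y := Iff.rfl

lemma img_inter (S T : Set V) : (some '' S) ∩ (some '' T) = some '' (S ∩ T) :=
  (Set.image_inter (Option.some_injective V)).symm

lemma ncard_img (S : Set V) : (some '' S).ncard = S.ncard :=
  Set.ncard_image_of_injective S (Option.some_injective V)

/-- Core lemma: if `S` is type I for `v` with `v ∈ S`, then its lift is type I for
`none` in `addLeaf G v` with label 1. -/
lemma core (S : Set V) (hS : TypeISet G v S) (hv : v ∈ S) :
    TypeISet (addLeaf G v) none (some '' S) ∧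
      HasLabel (addLeaf G v) none (some '' S) 1 := by
  obtain ⟨hind, hmid, -⟩ := hS
  have hvN : (some '' S) ∩ (addLeaf G v).neighborSet none = {some v} := by
    rw [nnone]
    ext a
    simp only [Set.mem_inter_iff, Set.mem_singleton_iff, Set.mem_image]
    constructor
    · rintro ⟨-, h⟩; exact h
    · rintro rfl; exact ⟨⟨v, hv, rfl⟩, rfl⟩
  refine ⟨⟨?_, ?_, ?_⟩, ?_⟩
  · rintro a ⟨x, hx, rfl⟩ b ⟨y, hy, rfl⟩ hadj
    exact hind x hx y hy hadj
  · rintro u hu hun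
    obtain ⟨x⟩ | x := u
    · exact absurd rfl hun
    have hx : x ∉ S := fun h => hu ⟨x, h, rfl⟩
    have hxv : x ≠ v := fun h => hx (h ▸ hv)
    rw [nsome_ne G v x hxv, img_inter, ncard_img]
    exact hmid x hx hxv
  · right; rw [hvN]; simp
  · right; left
    refine ⟨by simp, 1, le_refl 1, by rw [hvN]; simp, by norm_num⟩

end Helpers

theorem statement14 {V : Type*} [Fintype V] [Nontrivial V] (G : SimpleGraph V)
    (v : V) :
    (∀ S' : Set (Option V),
      (TypeISet (addLeaf G v) none S' ∧ HasLabel (addLeaf G v) none S' 1) ↔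
        ∃ S : Set V, S' = some '' S ∧ TypeISet G v S ∧ HasLabel G v S 0) ∧
    (∀ R : Set V, TypeISet G v R → HasLabel G v R (-1) →
      TypeISet (addLeaf G v) none (some '' (R ∪ {v})) ∧
        HasLabel (addLeaf G v) none (some '' (R ∪ {v})) 1) := by
  constructor
  · intro S'
    constructor
    · rintro ⟨⟨hind, hmid, -⟩, hlab⟩
      -- extract from label 1 : none ∉ S' and card = 1
      have hx : none ∉ S' ∧ (S' ∩ (addLeaf G v).neighborSet none).ncard = 1 := by
        rcases hlab with ⟨-, h⟩ | ⟨h1, k, hk, hc, hl⟩ | ⟨-, -, -, h⟩ | ⟨-, -, -, h⟩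
        · norm_num at h
        · have : k = 1 := by omega
          exact ⟨h1, this ▸ hc⟩
        · norm_num at h
        · norm_num at h
      obtain ⟨hnone, hcard⟩ := hx
      have hvS' : some v ∈ S' := by
        rw [nnone] at hcard
        have hne : (S' ∩ {some v}).Nonempty := by
          rw [← Set.ncard_pos (Set.toFinite _), hcard]; norm_num
        obtain ⟨a, ha, hav⟩ := hne
        exact hav ▸ ha
      refine ⟨some ⁻¹' S', ?_, ?_, ?_⟩
      · ext a
        obtain ⟨x⟩ | x := a
        · simpa using hnone
        · simp [Set.mem_image]
      · refine ⟨?_, ?_, ?_⟩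
        · intro x hx y hy hadj
          exact hind (some x) hx (some y) hy hadj
        · intro u hu huv
          have h := hmid (some u) hu (by simp)
          rw [nsome_ne G v u huv] at h
          have heq : S' ∩ (some '' G.neighborSet u) =
              some '' ((some ⁻¹' S') ∩ G.neighborSet u) := by
            ext a
            obtain ⟨x⟩ | x := a
            · simp [hnone]
            · simp [Set.mem_image]
          rwa [heq, ncard_img] at h
        · left; exact hvS'
      · left; exact ⟨hvS', rfl⟩
    · rintro ⟨S, rfl, hS, hlab⟩
      have hv : v ∈ S := by
        rcases hlab with ⟨h, -⟩ | ⟨-, k, hk, -, hl⟩ | ⟨-, -, -, h⟩ | ⟨-, -, -, h⟩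
        · exact h
        · omega
        · norm_num at h
        · norm_num at h
      exact core G v S hS hv
  · intro R hR hlab
    have hx : v ∉ R ∧ R ∩ G.neighborSet v = ∅ ∧
        (∀ u ∈ G.neighborSet v, (R ∩ G.neighborSet u).ncard = 1) := by
      rcases hlab with ⟨-, h⟩ | ⟨-, k, hk, -, hl⟩ | ⟨h1, h2, h3, -⟩ | ⟨-, -, -, h⟩
      · norm_num at h
      · omega
      · exact ⟨h1, h2, h3⟩
      · norm_num at h
    obtain ⟨hvR, hRN, hone⟩ := hx
    obtain ⟨hind, hmid, -⟩ := hR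
    refine core G v (R ∪ {v}) ⟨?_, ?_, ?_⟩ (by simp)
    · rintro x (hx | rfl) y (hy | rfl) hadj
      · exact hind x hx y hy hadj
      · exact (Set.eq_empty_iff_forall_notMem.mp hRN x) ⟨hx, hadj.symm⟩
      · exact (Set.eq_empty_iff_forall_notMem.mp hRN y) ⟨hy, hadj⟩
      · exact G.loopless.irrefl _ hadj
    · intro u hu huv
      have huR : u ∉ R := fun h => hu (Or.inl h)
      by_cases hadj : G.Adj u v
      · have h1 : (R ∩ G.neighborSet u).ncard = 1 := hone u hadj.symm
        have heq : (R ∪ {v}) ∩ G.neighborSet u = insert v (R ∩ G.neighborSet u) := by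
          ext a
          simp only [Set.mem_inter_iff, Set.mem_union, Set.mem_singleton_iff,
            Set.mem_insert_iff]
          constructor
          · rintro ⟨hx | rfl, hN⟩
            · exact Or.inr ⟨hx, hN⟩
            · exact Or.inl rfl
          · rintro (rfl | ⟨h1, h2⟩)
            · exact ⟨Or.inr rfl, hadj⟩
            · exact ⟨Or.inl h1, h2⟩
        rw [heq, Set.ncard_insert_of_notMem (fun h => hvR h.1) (Set.toFinite _), h1]
        omega
      · have heq : (R ∪ {v}) ∩ G.neighborSet u = R ∩ G.neighborSet u := by
          ext a
          simp only [Set.mem_inter_iff, Set.mem_union, Set.mem_singleton_iff]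
          constructor
          · rintro ⟨hx | rfl, hN⟩
            · exact ⟨hx, hN⟩
            · exact absurd hN hadj
          · rintro ⟨h1, h2⟩; exact ⟨Or.inl h1, h2⟩
        rw [heq]
        exact hmid u huR huv
    · left; simp
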